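/- Let (C_0, C_1) be an equitable partition of Q_n with quotient matrix [[a,b],[c,d]] and associated function f. Then for every x ≠ 0, (b−c)·f̂(x) = Σ_{y+z=x} f̂(y)·f̂(z), and moreover bc = Σ_y f̂(y)^2. -/

import Mathlib

attribute [local instance] Classical.propDecidable
noncomputable section

/-- Vertices of the `n`-cube: binary words of length `n` over GF(2). -/
abbrev Vtx (n : ℕ) := Fin n → ZMod 2

/-- The (Hamming) weight of a word: the number of ones. -/
def wt {n : ℕ} (x : Vtx n) : ℕ := (Finset.univ.filter (fun i => x i = 1)).card

/-- The inner product `x₁y₁ + ⋯ + xₙyₙ` computed as a natural number. -/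
def ip {n : ℕ} (x y : Vtx n) : ℕ := ∑ i, (x i).val * (y i).val

/-- The character `χ_y(x) = (−1)^⟨x,y⟩`. -/
def chi {n : ℕ} (y x : Vtx n) : ℚ := (-1) ^ ip x y

/-- `leq z x` means `z ≼ x`, i.e. `zᵢ ≤ xᵢ` for all `i`. -/
def leq {n : ℕ} (x y : Vtx n) : Prop := ∀ i, (x i).val ≤ (y i).val

/-- The Fourier coefficient `f̂(y) = 2^{−n} Σ_z f(z)(−1)^⟨z,y⟩`. -/
def hat {n : ℕ} (f : Vtx n → ℚ) (y : Vtx n) : ℚ :=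
  (∑ z, f z * (-1 : ℚ) ^ ip z y) / 2 ^ n

/-- Adjacency in the `n`-cube: the words differ in exactly one coordinate. -/
def adj {n : ℕ} (x y : Vtx n) : Prop :=
  (Finset.univ.filter (fun i => x i ≠ y i)).card = 1

/-- `(C0, complement of C0)` is an equitable partition with quotient matrix
`[[a,b],[c,d]]`. -/
def IsEqPartition {n : ℕ} (C0 : Finset (Vtx n)) (a b c d : ℕ) : Prop :=
  (∀ x ∈ C0, (Finset.univ.filter (fun y => adj x y ∧ y ∈ C0)).card = a ∧
             (Finset.univ.filter (fun y => adj x y ∧ y ∉ C0)).card = b) ∧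
  (∀ x ∉ C0, (Finset.univ.filter (fun y => adj x y ∧ y ∈ C0)).card = c ∧
             (Finset.univ.filter (fun y => adj x y ∧ y ∉ C0)).card = d)

/-- The associated function of an equitable partition: `b` on `C0`, `−c` outside. -/
def assoc {n : ℕ} (C0 : Finset (Vtx n)) (b c : ℕ) : Vtx n → ℚ :=
  fun x => if x ∈ C0 then (b : ℚ) else -(c : ℚ)

/-- The face `Γ_u^v = {z + v : z ≼ u}` (of dimension `wt u`). -/
def face {n : ℕ} (u v : Vtx n) : Finset (Vtx n) :=
  Finset.univ.filter (fun x => ∃ z, leq z u ∧ x = z + v)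

namespace Aux6

def sg (t : ZMod 2) : ℚ := if t = 0 then 1 else -1

def bip {n : ℕ} (x y : Vtx n) : ZMod 2 := ∑ i, x i * y i

lemma sg_zero : sg 0 = 1 := by simp [sg]
lemma sg_one : sg 1 = -1 := by simp [sg]

lemma z2_add_self (t : ZMod 2) : t + t = 0 := by fin_cases t <;> rfl

lemma sg_add (s t : ZMod 2) : sg (s + t) = sg s * sg t := by
  fin_cases s <;> fin_cases t <;>
    [exact (by simp [sg] : sg (0 + 0) = sg 0 * sg 0);
     exact (by simp [sg] : sg (0 + 1) = sg 0 * sg 1);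
     exact (by simp [sg] : sg (1 + 0) = sg 1 * sg 0);
     exact (by simp [sg, z2_add_self 1] : sg (1 + 1) = sg 1 * sg 1)]

lemma z2_ne (t : ZMod 2) (h : t ≠ 0) : t = 1 := by fin_cases t <;> [exact absurd rfl h; rfl]

variable {n : ℕ}

lemma v_add_self (z : Vtx n) : z + z = 0 := funext fun i => z2_add_self (z i)

lemma bip_comm (x y : Vtx n) : bip x y = bip y x := by simp [bip, mul_comm]

lemma bip_add_left (x y z : Vtx n) : bip (x + y) z = bip x z + bip y z := by
  simp [bip, add_mul, Finset.sum_add_distrib]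

lemma bip_zero_left (y : Vtx n) : bip 0 y = 0 := by simp [bip]

lemma neg_one_pow_nat (k : ℕ) : ((-1 : ℚ)) ^ k = sg ((k : ZMod 2)) := by
  induction k with
  | zero => simp [sg]
  | succ k ih =>
    rw [pow_succ, ih, Nat.cast_succ, sg_add, sg_one]

lemma neg_one_ip (x y : Vtx n) : ((-1 : ℚ)) ^ ip x y = sg (bip x y) := by
  rw [neg_one_pow_nat]
  congr 1
  unfold ip bip
  push_cast [ZMod.natCast_val, ZMod.cast_id]
  rfl

lemma sum_sg (x : Vtx n) (hx : x ≠ 0) : ∑ z : Vtx n, sg (bip x z) = 0 := by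
  have hex : ∃ i, x i ≠ 0 := by
    by_contra hc; push_neg at hc; exact hx (funext hc)
  obtain ⟨i, hi⟩ := hex
  have hx1 : x i = 1 := z2_ne _ hi
  set e : Vtx n := fun j => if j = i then 1 else 0 with he
  have hbe : bip x e = 1 := by
    have : ∀ j, x j * e j = if j = i then x j else 0 := by
      intro j; by_cases hj : j = i <;> simp [he, hj]
    simp only [bip, this, Finset.sum_ite_eq', Finset.mem_univ, if_true, hx1]
  have key : ∀ z : Vtx n, sg (bip x (z + e)) = - sg (bip x z) := by
    intro z
    rw [bip_comm, bip_add_left, sg_add, bip_comm z x, bip_comm e x, hbe, sg_one]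
    ring
  have h2 : ∑ z : Vtx n, sg (bip x (z + e)) = ∑ z : Vtx n, sg (bip x z) :=
    Fintype.sum_equiv (Equiv.addRight e) _ _ (fun z => rfl)
  have h3 : ∑ z : Vtx n, sg (bip x (z + e)) = - ∑ z : Vtx n, sg (bip x z) := by
    simp only [key, Finset.sum_neg_distrib]
  have := h2.symm.trans h3
  linarith

lemma card_vtx : (Finset.univ : Finset (Vtx n)).card = 2 ^ n := by
  simp [Finset.card_univ]

lemma hat_sg (f : Vtx n → ℚ) (y : Vtx n) :
    hat f y = (∑ z, f z * sg (bip z y)) / 2 ^ n := by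
  unfold hat
  congr 1
  exact Finset.sum_congr rfl fun z _ => by rw [neg_one_ip]

lemma conv (f : Vtx n → ℚ) (x : Vtx n) :
    ∑ y : Vtx n, hat f y * hat f (x + y)
      = (∑ u, f u ^ 2 * sg (bip u x)) / 2 ^ n := by
  have h2n : (2 : ℚ) ^ n ≠ 0 := by positivity
  simp only [hat_sg]
  have key : ∀ u v : Vtx n,
      (∑ y : Vtx n, sg (bip u y) * sg (bip v (x + y)))
        = if u = v then sg (bip u x) * 2 ^ n else 0 := by
    intro u v
    have hterm : ∀ y, sg (bip u y) * sg (bip v (x + y))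
        = sg (bip v x) * sg (bip (u + v) y) := by
      intro y
      have h1 : bip v (x + y) = bip v x + bip v y := by
        rw [bip_comm, bip_add_left, bip_comm x v, bip_comm y v]
      rw [h1, sg_add, bip_add_left, sg_add]
      ring
    simp only [hterm, ← Finset.mul_sum]
    by_cases huv : u = v
    · subst huv
      rw [if_pos rfl, v_add_self]
      simp only [bip_zero_left, sg_zero, Finset.sum_const, card_vtx, nsmul_eq_mul,
        mul_one]
      push_cast
      ring
    · rw [if_neg huv]
      have hne : u + v ≠ 0 := by
        intro h0
        apply huv
        have := congrArg (· + v) h0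
        simpa [add_assoc, v_add_self] using this
      rw [sum_sg _ hne, mul_zero]
  calc ∑ y : Vtx n, (∑ z, f z * sg (bip z y)) / 2 ^ n * ((∑ z, f z * sg (bip z (x + y))) / 2 ^ n)
      = ∑ y : Vtx n, (∑ u : Vtx n, ∑ v : Vtx n,
          f u * f v * (sg (bip u y) * sg (bip v (x + y)))) / (2 ^ n * 2 ^ n) := by
        refine Finset.sum_congr rfl fun y _ => ?_
        rw [div_mul_div_comm]
        congr 1
        rw [Finset.sum_mul_sum]
        exact Finset.sum_congr rfl fun u _ => Finset.sum_congr rfl fun v _ => by ring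
    _ = (∑ y : Vtx n, ∑ u : Vtx n, ∑ v : Vtx n,
          f u * f v * (sg (bip u y) * sg (bip v (x + y)))) / (2 ^ n * 2 ^ n) := by
        rw [← Finset.sum_div]
    _ = (∑ u : Vtx n, ∑ v : Vtx n,
          f u * f v * ∑ y : Vtx n, sg (bip u y) * sg (bip v (x + y))) / (2 ^ n * 2 ^ n) := by
        congr 1
        rw [Finset.sum_comm]
        refine Finset.sum_congr rfl fun u _ => ?_
        rw [Finset.sum_comm]
        refine Finset.sum_congr rfl fun v _ => ?_
        rw [Finset.mul_sum]
    _ = (∑ u : Vtx n, f u ^ 2 * sg (bip u x) * 2 ^ n) / (2 ^ n * 2 ^ n) := by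
        congr 1
        refine Finset.sum_congr rfl fun u _ => ?_
        simp only [key, mul_ite, mul_zero]
        rw [Finset.sum_ite_eq]
        simp only [Finset.mem_univ, if_true]
        ring
    _ = (∑ u, f u ^ 2 * sg (bip u x)) / 2 ^ n := by
        rw [← Finset.sum_mul]
        field_simp

lemma adj_comm (x y : Vtx n) : adj x y ↔ adj y x := by
  unfold adj
  have : (Finset.univ.filter fun i => x i ≠ y i) = (Finset.univ.filter fun i => y i ≠ x i) := by
    ext i; simp [ne_comm]
  rw [this]

lemma edge_count (C0 : Finset (Vtx n)) {a b c d : ℕ} (h : IsEqPartition C0 a b c d) :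
    C0.card * b = C0ᶜ.card * c := by
  have h1 : ∀ x ∈ C0,
      (Finset.univ.filter (fun y => adj x y ∧ y ∉ C0)).card
        = ∑ y ∈ C0ᶜ, (if adj x y then 1 else 0) := by
    intro x _
    rw [← Finset.card_filter]
    congr 1
    ext y; simp [and_comm]
  have h2 : ∀ y ∈ C0ᶜ,
      (Finset.univ.filter (fun z => adj y z ∧ z ∈ C0)).card
        = ∑ x ∈ C0, (if adj x y then 1 else 0) := by
    intro y _
    rw [← Finset.card_filter]
    have : (Finset.univ.filter (fun z => adj y z ∧ z ∈ C0))
        = C0.filter (fun x => adj x y) := by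
      ext z; simp [and_comm, adj_comm y z]
    rw [this]
  calc C0.card * b = ∑ x ∈ C0, b := by rw [Finset.sum_const, smul_eq_mul]
    _ = ∑ x ∈ C0, (Finset.univ.filter (fun y => adj x y ∧ y ∉ C0)).card :=
        (Finset.sum_congr rfl fun x hx => ((h.1 x hx).2).symm)
    _ = ∑ x ∈ C0, ∑ y ∈ C0ᶜ, (if adj x y then 1 else 0) :=
        Finset.sum_congr rfl h1
    _ = ∑ y ∈ C0ᶜ, ∑ x ∈ C0, (if adj x y then 1 else 0) := Finset.sum_comm
    _ = ∑ y ∈ C0ᶜ, (Finset.univ.filter (fun z => adj y z ∧ z ∈ C0)).card :=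
        (Finset.sum_congr rfl fun y hy => (h2 y hy).symm)
    _ = ∑ y ∈ C0ᶜ, c := Finset.sum_congr rfl fun y hy =>
        (h.2 y (Finset.mem_compl.mp hy)).1
    _ = C0ᶜ.card * c := by rw [Finset.sum_const, smul_eq_mul]

end Aux6

open Aux6 in
theorem stmt6 (n a b c d : ℕ) (C0 : Finset (Vtx n))
    (h : IsEqPartition C0 a b c d) (hab : a + b = n) (hcd : c + d = n) :
    (∀ x : Vtx n, x ≠ 0 →
      ((b : ℚ) - c) * hat (assoc C0 b c) x
        = ∑ p ∈ Finset.univ.filter (fun p : Vtx n × Vtx n => p.1 + p.2 = x),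
            hat (assoc C0 b c) p.1 * hat (assoc C0 b c) p.2) ∧
    (b : ℚ) * c = ∑ y : Vtx n, hat (assoc C0 b c) y ^ 2 := by
  classical
  set f := assoc C0 b c with hf
  have h2n : (2 : ℚ) ^ n ≠ 0 := by positivity
  have hsq : ∀ u, f u ^ 2 = ((b : ℚ) - c) * f u + b * c := by
    intro u
    by_cases hu : u ∈ C0 <;> simp [hf, assoc, hu] <;> ring
  have hfilter0 : Finset.univ.filter (fun z : Vtx n => z ∈ C0) = C0 := by ext z; simp
  have hfilter1 : Finset.univ.filter (fun z : Vtx n => z ∉ C0) = C0ᶜ := by ext z; simp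
  have hsum : ∑ z : Vtx n, f z = 0 := by
    have he := Aux6.edge_count C0 h
    have h1 : ∑ z : Vtx n, f z = C0.card * (b : ℚ) - C0ᶜ.card * c := by
      rw [hf]
      unfold assoc
      rw [Finset.sum_ite, hfilter0, hfilter1, Finset.sum_const, Finset.sum_const]
      simp only [nsmul_eq_mul, mul_neg]
      ring
    rw [h1]
    have h2 : ((C0.card * b : ℕ) : ℚ) = ((C0ᶜ.card * c : ℕ) : ℚ) := by exact_mod_cast he
    push_cast at h2
    linarith
  constructor
  · intro x hx
    have hpair : ∑ p ∈ Finset.univ.filter (fun p : Vtx n × Vtx n => p.1 + p.2 = x),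
        hat f p.1 * hat f p.2 = ∑ y : Vtx n, hat f y * hat f (x + y) := by
      refine Finset.sum_bij' (fun p _ => p.1) (fun y _ => (y, x + y)) ?_ ?_ ?_ ?_ ?_
      · intro p _; exact Finset.mem_univ _
      · intro y _
        simp only [Finset.mem_filter, Finset.mem_univ, true_and]
        rw [add_comm x y, ← add_assoc, Aux6.v_add_self, zero_add]
      · intro p hp
        simp only [Finset.mem_filter, Finset.mem_univ, true_and] at hp
        have h2 : x + p.1 = p.2 := by
          rw [← hp, add_comm p.1 p.2, add_assoc, Aux6.v_add_self, add_zero]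
        rw [h2]
      · intro y _; rfl
      · intro p hp
        simp only [Finset.mem_filter, Finset.mem_univ, true_and] at hp
        have h2 : x + p.1 = p.2 := by
          rw [← hp, add_comm p.1 p.2, add_assoc, Aux6.v_add_self, add_zero]
        rw [h2]
    rw [hpair, Aux6.conv]
    have hz : ∑ u : Vtx n, Aux6.sg (Aux6.bip u x) = 0 := by
      have hc : ∀ u : Vtx n, Aux6.sg (Aux6.bip u x) = Aux6.sg (Aux6.bip x u) :=
        fun u => by rw [Aux6.bip_comm]
      simp only [hc]
      exact Aux6.sum_sg x hx
    have hexp : ∑ u : Vtx n, f u ^ 2 * Aux6.sg (Aux6.bip u x)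
        = ((b : ℚ) - c) * ∑ u : Vtx n, f u * Aux6.sg (Aux6.bip u x) := by
      have ht : ∀ u, f u ^ 2 * Aux6.sg (Aux6.bip u x)
          = ((b : ℚ) - c) * (f u * Aux6.sg (Aux6.bip u x)) + b * c * Aux6.sg (Aux6.bip u x) :=
        fun u => by rw [hsq u]; ring
      simp only [ht]
      rw [Finset.sum_add_distrib, ← Finset.mul_sum, ← Finset.mul_sum, hz, mul_zero, add_zero]
    rw [hexp, mul_div_assoc, ← Aux6.hat_sg]
  · have hzero : ∀ y : Vtx n, hat f y ^ 2 = hat f y * hat f (0 + y) :=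
      fun y => by rw [zero_add, sq]
    have hrw : (∑ y : Vtx n, hat f y ^ 2) = ∑ y : Vtx n, hat f y * hat f (0 + y) :=
      Finset.sum_congr rfl fun y _ => hzero y
    rw [hrw, Aux6.conv]
    have hb0 : ∀ u : Vtx n, Aux6.sg (Aux6.bip u 0) = 1 :=
      fun u => by rw [Aux6.bip_comm, Aux6.bip_zero_left, Aux6.sg_zero]
    have hnum : ∑ u : Vtx n, f u ^ 2 * Aux6.sg (Aux6.bip u 0) = 2 ^ n * ((b : ℚ) * c) := by
      simp only [hb0, mul_one, hsq]
      rw [Finset.sum_add_distrib, ← Finset.mul_sum, hsum, mul_zero, zero_add,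
        Finset.sum_const, Aux6.card_vtx, nsmul_eq_mul]
      push_cast
      ring
    rw [hnum, mul_div_cancel_left₀ _ h2n]
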